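/- Let r ≥ 0 and let (x_n) be a sequence in an S-metric space (X,S). Then the diameter of the rough statistical limit set st-LIM^r x_n is at most 3r; that is, for all ξ, η ∈ st-LIM^r x_n, S(ξ,ξ,η) ≤ 3r. -/

import Mathlib

open Filter

open scoped Classical in
/-- Natural density: `A ⊆ ℕ` has density `d` if `|{k ∈ A : k < n}|/n → d`. -/
def HasDensity (A : Set ℕ) (d : ℝ) : Prop :=
  Filter.Tendsto
    (fun n : ℕ => (((Finset.range n).filter (fun k => k ∈ A)).card : ℝ) / n)
    Filter.atTop (nhds d)

/-- `S` is an S-metric on `X`. -/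
structure IsSMetric {X : Type*} (S : X → X → X → ℝ) : Prop where
  nonneg : ∀ x y z, 0 ≤ S x y z
  eq_zero_iff : ∀ x y z, S x y z = 0 ↔ x = y ∧ y = z
  triangle : ∀ x y z a, S x y z ≤ S x x a + S y y a + S z z a

/-- Ordinary convergence of a sequence in an S-metric space. -/
def SConvergesTo {X : Type*} (S : X → X → X → ℝ) (x : ℕ → X) (l : X) : Prop :=
  ∀ ε : ℝ, 0 < ε → ∃ N : ℕ, ∀ n ≥ N, S (x n) (x n) l < ε

/-- Statistical convergence of a sequence in an S-metric space. -/
def SStatConvergesTo {X : Type*} (S : X → X → X → ℝ) (x : ℕ → X) (l : X) : Prop :=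
  ∀ ε : ℝ, 0 < ε → HasDensity {n : ℕ | ε ≤ S (x n) (x n) l} 0

/-- Cauchy sequence in an S-metric space. -/
def SCauchy {X : Type*} (S : X → X → X → ℝ) (x : ℕ → X) : Prop :=
  ∀ ε : ℝ, 0 < ε → ∃ k : ℕ, ∀ n ≥ k, ∀ m ≥ k, S (x n) (x n) (x m) < ε

/-- Statistically Cauchy sequence in an S-metric space. -/
def SStatCauchy {X : Type*} (S : X → X → X → ℝ) (x : ℕ → X) : Prop :=
  ∀ ε : ℝ, 0 < ε → ∃ N : ℕ, HasDensity {n : ℕ | ε ≤ S (x n) (x n) (x N)} 0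

/-- Statistically bounded sequence in an S-metric space. -/
def SStatBounded {X : Type*} (S : X → X → X → ℝ) (x : ℕ → X) : Prop :=
  ∀ u : X, ∃ B : ℝ, 0 < B ∧ HasDensity {n : ℕ | B ≤ S (x n) (x n) u} 0

/-- Rough convergence with roughness degree `r`. -/
def SRoughConvergesTo {X : Type*} (S : X → X → X → ℝ) (r : ℝ) (x : ℕ → X) (p : X) : Prop :=
  ∀ ε : ℝ, 0 < ε → ∃ k : ℕ, ∀ n ≥ k, S (x n) (x n) p < r + ε

/-- Rough statistical convergence with roughness degree `r`. -/
def SRoughStatConvergesTo {X : Type*} (S : X → X → X → ℝ) (r : ℝ) (x : ℕ → X) (p : X) : Prop :=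
  ∀ ε : ℝ, 0 < ε → HasDensity {n : ℕ | r + ε ≤ S (x n) (x n) p} 0

/-- The rough statistical limit set `st-LIM^r x_n`. -/
def stLIM {X : Type*} (S : X → X → X → ℝ) (r : ℝ) (x : ℕ → X) : Set X :=
  {p : X | SRoughStatConvergesTo S r x p}

/-- The topology on `X` generated by the open balls of the S-metric. -/
def sBallTopology {X : Type*} (S : X → X → X → ℝ) : TopologicalSpace X :=
  TopologicalSpace.generateFrom
    {B : Set X | ∃ c : X, ∃ ε : ℝ, 0 < ε ∧ B = {y : X | S y y c < ε}}

theorem stmt_11 {X : Type*} [Nonempty X] (S : X → X → X → ℝ) (hS : IsSMetric S)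
    (r : ℝ) (hr : 0 ≤ r) (x : ℕ → X) :
    ∀ ξ ∈ stLIM S r x, ∀ η ∈ stLIM S r x, S ξ ξ η ≤ 3 * r := by
  have hzero : ∀ a : X, S a a a = 0 := fun a => (hS.eq_zero_iff a a a).2 ⟨rfl, rfl⟩
  have hsym : ∀ a b : X, S a a b = S b b a := by
    have h1 : ∀ a b : X, S a a b ≤ S b b a := fun a b => by
      have := hS.triangle a a b a
      simpa [hzero] using this
    exact fun a b => le_antisymm (h1 a b) (h1 b a)
  intro ξ hξ η hη
  refine le_of_forall_pos_le_add ?_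
  intro ε hε
  have hε3 : (0:ℝ) < ε / 3 := by linarith
  have hA := hξ (ε/3) hε3
  have hB := hη (ε/3) hε3
  -- find n with both distances small
  have hn : ∃ n : ℕ, S (x n) (x n) ξ < r + ε/3 ∧ S (x n) (x n) η < r + ε/3 := by
    by_contra h
    push_neg at h
    have hall : ∀ n : ℕ, r + ε/3 ≤ S (x n) (x n) ξ ∨ r + ε/3 ≤ S (x n) (x n) η := by
      intro n
      by_cases hc : r + ε/3 ≤ S (x n) (x n) ξ
      · exact Or.inl hc
      · exact Or.inr (h n (lt_of_not_ge hc))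
    classical
    set A : Set ℕ := {n : ℕ | r + ε/3 ≤ S (x n) (x n) ξ}
    set B : Set ℕ := {n : ℕ | r + ε/3 ≤ S (x n) (x n) η}
    have hsum : Tendsto (fun n : ℕ =>
        (((Finset.range n).filter (fun k => k ∈ A)).card : ℝ) / n
        + (((Finset.range n).filter (fun k => k ∈ B)).card : ℝ) / n) atTop (nhds 0) := by
      have := hA.add hB
      simpa using this
    have hge : ∀ᶠ n : ℕ in atTop, (1:ℝ) ≤
        (((Finset.range n).filter (fun k => k ∈ A)).card : ℝ) / n
        + (((Finset.range n).filter (fun k => k ∈ B)).card : ℝ) / n := by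
      filter_upwards [eventually_ge_atTop 1] with n hn1
      have hnpos : (0:ℝ) < n := by exact_mod_cast hn1
      have hcard : n ≤ ((Finset.range n).filter (fun k => k ∈ A)).card
          + ((Finset.range n).filter (fun k => k ∈ B)).card := by
        have hsub : (Finset.range n).filter (fun k => k ∉ A) ⊆
            (Finset.range n).filter (fun k => k ∈ B) := by
          intro k hk
          simp only [Finset.mem_filter] at hk ⊢
          refine ⟨hk.1, ?_⟩
          rcases hall k with h1 | h2
          · exact absurd h1 hk.2
          · exact h2
        calc n = (Finset.range n).card := (Finset.card_range n).symm
          _ = ((Finset.range n).filter (fun k => k ∈ A)).card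
              + ((Finset.range n).filter (fun k => k ∉ A)).card :=
            (Finset.card_filter_add_card_filter_not _).symm
          _ ≤ _ := by
            exact Nat.add_le_add_left (Finset.card_le_card hsub) _
      have : (n:ℝ) ≤ (((Finset.range n).filter (fun k => k ∈ A)).card : ℝ)
          + (((Finset.range n).filter (fun k => k ∈ B)).card : ℝ) := by
        exact_mod_cast hcard
      rw [← add_div, le_div_iff₀ hnpos]
      linarith
    have : (1:ℝ) ≤ 0 := ge_of_tendsto hsum hge
    linarith
  obtain ⟨n, h1, h2⟩ := hn
  have htri := hS.triangle ξ ξ η (x n)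
  rw [hsym ξ (x n), hsym η (x n)] at htri
  linarith
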